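/- Let R and S be commutative rings with unity, f : R → S a ring homomorphism, and J a proper ideal of S. Assume f maps every regular element of R to a regular element of S, that R ⋈^f J satisfies condition ★, and that Z(R ⋈^f J) ⊆ Jac(R ⋈^f J). If R is a Prüfer ring and J_{T_m} = f(r)·J_{T_m} for every maximal ideal m of R and every regular element r of R, then R ⋈^f J is a Prüfer ring. -/

import Mathlib

open Pointwise

/-- The amalgamation `R ⋈^f J` of `R` with `S` along the ideal `J` with respect to
`f : R →+* S`, as a subring of `R × S`. -/
def amalgamation {R S : Type*} [CommRing R] [CommRing S] (f : R →+* S) (J : Ideal S) :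
    Subring (R × S) where
  carrier := {p | ∃ j ∈ J, p.2 = f p.1 + j}
  zero_mem' := ⟨0, J.zero_mem, by simp⟩
  one_mem' := ⟨0, J.zero_mem, by simp⟩
  add_mem' := by
    rintro ⟨a, a'⟩ ⟨b, b'⟩ ⟨j, hj, h1⟩ ⟨k, hk, h2⟩
    exact ⟨j + k, J.add_mem hj hk, by simp_all; ring⟩
  neg_mem' := by
    rintro ⟨a, a'⟩ ⟨j, hj, h1⟩
    exact ⟨-j, J.neg_mem hj, by simp_all; ring⟩
  mul_mem' := by
    rintro ⟨a, a'⟩ ⟨b, b'⟩ ⟨j, hj, h1⟩ ⟨k, hk, h2⟩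
    refine ⟨f a * k + j * f b + j * k, ?_, by simp_all; ring⟩
    exact J.add_mem (J.add_mem (J.mul_mem_left _ hk) (J.mul_mem_right _ hj))
      (J.mul_mem_right _ hj)

/-- The set of zero-divisors of a commutative ring `A`. -/
def zdivSet (A : Type*) [CommRing A] : Set A := {a | ∃ b, b ≠ 0 ∧ a * b = 0}

/-- A commutative ring is a Prüfer ring if every nonzero finitely generated regular ideal
is projective (equivalently, invertible). -/
def IsPruferRing (A : Type*) [CommRing A] : Prop :=
  ∀ I : Ideal A, I ≠ ⊥ → I.FG → (∃ r ∈ I, r ∈ nonZeroDivisors A) → Module.Projective A I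

/-- The multiplicatively closed subset `T_m = f(R \\ m) + J` of `S`. -/
def amalgT {R S : Type*} [CommRing R] [CommRing S] (f : R →+* S) (J : Ideal S)
    (m : Ideal R) (hm : m.IsPrime) : Submonoid S where
  carrier := {s | ∃ a ∉ m, ∃ j ∈ J, s = f a + j}
  one_mem' := ⟨1, fun h => hm.ne_top ((Ideal.eq_top_iff_one m).mpr h), 0, J.zero_mem, by simp⟩
  mul_mem' := by
    rintro s t ⟨a, ha, j, hj, rfl⟩ ⟨b, hb, k, hk, rfl⟩
    refine ⟨a * b, fun h => ?_, f a * k + j * f b + j * k, ?_, by simp [map_mul]; ring⟩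
    · rcases hm.mem_or_mem h with h | h
      exacts [ha h, hb h]
    · exact J.add_mem (J.add_mem (J.mul_mem_left _ hk) (J.mul_mem_right _ hj))
        (J.mul_mem_right _ hj)

/-- Condition `★`: the zero-divisors of `R ⋈^f J` are exactly the elements whose first
coordinate is a zero-divisor of `R` together with the elements `(r, f r + j)` such that
`f r + j` is killed by some nonzero element of `J`. -/
def conditionStar {R S : Type*} [CommRing R] [CommRing S] (f : R →+* S) (J : Ideal S) : Prop :=
  ∀ x : amalgamation f J, x ∈ zdivSet (amalgamation f J) ↔
    ((x : R × S).1 ∈ zdivSet R ∨ ∃ j' ∈ J, j' ≠ 0 ∧ j' * (x : R × S).2 = 0)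

set_option synthInstance.maxHeartbeats 1000000
set_option maxHeartbeats 1000000


theorem exists_mul_eq_span_of_projective {R : Type*} [CommRing R] (I : Ideal R) (a : R)
    (ha : a ∈ I) (hp : Module.Projective R I) :
    ∃ I' : Ideal R, I * I' = Ideal.span {a} := by
  obtain ⟨s, hs⟩ := (Module.projective_def).mp hp
  set g : I →₀ R := s ⟨a, ha⟩ with hg
  refine ⟨Ideal.span (Set.range fun p : I => g p), ?_⟩
  have keyrel : ∀ (r : R) (hr : r ∈ I) (p : I), a * (s ⟨r, hr⟩) p = r * g p := by
    intro r hr p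
    have key : a • (s ⟨r, hr⟩) = r • g := by
      rw [hg, ← map_smul, ← map_smul]
      congr 1
      apply Subtype.ext
      simp [mul_comm]
    have := DFunLike.congr_fun key p
    simpa [Finsupp.smul_apply, smul_eq_mul] using this
  apply le_antisymm
  · rw [Ideal.mul_le]
    intro r hr t ht
    have hle : Ideal.span (Set.range fun p : I => g p) ≤
        (Ideal.span {a}).colon (Ideal.span {r}) := by
      rw [Ideal.span_le]
      rintro _ ⟨p, rfl⟩
      rw [SetLike.mem_coe, Ideal.mem_colon_span_singleton]
      rw [Ideal.mem_span_singleton']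
      exact ⟨(s ⟨r, hr⟩) p, by rw [mul_comm _ a, keyrel r hr p, mul_comm]⟩
    have := hle ht
    rw [Ideal.mem_colon_span_singleton] at this
    rw [mul_comm]
    exact this
  · rw [Ideal.span_le, Set.singleton_subset_iff]
    have h1 : (Finsupp.linearCombination R (id : I → I)) g = ⟨a, ha⟩ := hs ⟨a, ha⟩
    have h2 : a = ∑ p ∈ g.support, g p * (p : R) := by
      have := congrArg Subtype.val h1
      rw [Finsupp.linearCombination_apply, Finsupp.sum] at this
      simp only [Subtype.coe_mk] at this
      rw [← this]
      push_cast
      simp [smul_eq_mul]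
    rw [SetLike.mem_coe, h2]
    refine Ideal.sum_mem _ fun p _ => ?_
    rw [mul_comm (g p) (p : R)]
    exact Ideal.mul_mem_mul p.2 (Ideal.subset_span ⟨p, rfl⟩)


theorem projective_of_mul_eq_span {A : Type*} [CommRing A] (I I' : Ideal A) (x : A)
    (hx : x ∈ I) (hxreg : x ∈ nonZeroDivisors A) (h : I * I' = Ideal.span {x}) :
    Module.Projective A I := by
  have hcancel : ∀ {y z : A}, y * x = z * x → y = z := by
    intro y z hyz
    exact (mul_cancel_right_mem_nonZeroDivisors hxreg).mp hyz
  have hxmem : x ∈ I * I' := h ▸ Ideal.mem_span_singleton_self x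
  have hrep : ∃ (n : ℕ) (a : Fin n → A) (b : Fin n → A), (∀ i, a i ∈ I) ∧ (∀ i, b i ∈ I')
      ∧ x = ∑ i, a i * b i := by
    refine Submodule.mul_induction_on hxmem ?_ ?_
    · intro m hm n hn
      exact ⟨1, fun _ => m, fun _ => n, fun _ => hm, fun _ => hn, by simp⟩
    · rintro y z ⟨n₁, a₁, b₁, ha₁, hb₁, hy⟩ ⟨n₂, a₂, b₂, ha₂, hb₂, hz⟩
      refine ⟨n₁ + n₂, Fin.append a₁ a₂, Fin.append b₁ b₂, ?_, ?_, ?_⟩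
      · intro i
        refine Fin.addCases (fun i => ?_) (fun i => ?_) i
        · rw [Fin.append_left]; exact ha₁ i
        · rw [Fin.append_right]; exact ha₂ i
      · intro i
        refine Fin.addCases (fun i => ?_) (fun i => ?_) i
        · rw [Fin.append_left]; exact hb₁ i
        · rw [Fin.append_right]; exact hb₂ i
      · rw [Fin.sum_univ_add]
        simp only [Fin.append_left, Fin.append_right]
        rw [← hy, ← hz]
  obtain ⟨n, a, b, haI, hbI, hxsum⟩ := hrep
  have hchoice : ∀ (i : Fin n) (y : I), ∃ c : A, c * x = b i * (y : A) := by
    intro i y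
    have h2 : (y : A) * b i ∈ I * I' := Ideal.mul_mem_mul y.2 (hbI i)
    rw [h, Ideal.mem_span_singleton'] at h2
    obtain ⟨c, hc⟩ := h2
    exact ⟨c, by rw [hc, mul_comm]⟩
  classical
  let sfun : I → Fin n → A := fun y i => Classical.choose (hchoice i y)
  have hsfun : ∀ (y : I) (i : Fin n), sfun y i * x = b i * (y : A) :=
    fun y i => Classical.choose_spec (hchoice i y)
  let slin : I →ₗ[A] (Fin n → A) :=
  { toFun := sfun
    map_add' := by
      intro y z
      funext i
      show sfun (y + z) i = sfun y i + sfun z i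
      apply hcancel
      rw [hsfun, add_mul, hsfun, hsfun, Submodule.coe_add, mul_add]
    map_smul' := by
      intro c y
      funext i
      show sfun (c • y) i = c * sfun y i
      apply hcancel
      rw [hsfun, Submodule.coe_smul, smul_eq_mul, mul_assoc, hsfun]
      ring }
  let t : (Fin n → A) →ₗ[A] I :=
  { toFun := fun c => ⟨∑ i, c i * a i, Ideal.sum_mem _ fun i _ => I.mul_mem_left _ (haI i)⟩
    map_add' := by
      intro c d
      apply Subtype.ext
      show ∑ i, (c i + d i) * a i = (∑ i, c i * a i) + ∑ i, d i * a i
      rw [← Finset.sum_add_distrib]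
      exact Finset.sum_congr rfl fun i _ => by ring
    map_smul' := by
      intro e c
      apply Subtype.ext
      show ∑ i, (e * c i) * a i = e * ∑ i, c i * a i
      rw [Finset.mul_sum]
      exact Finset.sum_congr rfl fun i _ => by ring }
  have H : t.comp slin = LinearMap.id := by
    apply LinearMap.ext
    intro y
    apply Subtype.ext
    show ∑ i, sfun y i * a i = (y : A)
    apply hcancel
    rw [Finset.sum_mul]
    calc ∑ i, sfun y i * a i * x = ∑ i, a i * (sfun y i * x) := by
          exact Finset.sum_congr rfl fun i _ => by ring
      _ = ∑ i, a i * (b i * (y : A)) := by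
          exact Finset.sum_congr rfl fun i _ => by rw [hsfun]
      _ = (∑ i, a i * b i) * (y : A) := by rw [Finset.sum_mul]; exact Finset.sum_congr rfl fun i _ => by ring
      _ = (y : A) * x := by rw [← hxsum]; ring
  exact Module.Projective.of_split slin t H

section Key

variable {R S : Type*} [CommRing R] [CommRing S] (f : R →+* S) (J : Ideal S)

/-- The element `(0, j)` of the amalgamation, for `j ∈ J`. -/
def amalgK (j : S) (hj : j ∈ J) : amalgamation f J :=
  ⟨(0, j), ⟨j, hj, by simp⟩⟩

/-- Elements of the form `(0, j)` lie in every maximal ideal. -/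
theorem amalgK_mem_max [Nontrivial R]
    (hstar : conditionStar f J)
    (hZJ : zdivSet (amalgamation f J) ⊆
      (Ideal.jacobson (⊥ : Ideal (amalgamation f J)) : Set (amalgamation f J)))
    (j : S) (hj : j ∈ J) (M : Ideal (amalgamation f J)) (hM : M.IsMaximal) :
    amalgK f J j hj ∈ M := by
  have hz : amalgK f J j hj ∈ zdivSet (amalgamation f J) := by
    refine (hstar _).mpr (Or.inl ⟨1, one_ne_zero, ?_⟩)
    show (0 : R) * 1 = 0
    ring
  have hmem := hZJ hz
  rw [SetLike.mem_coe, Ideal.jacobson] at hmem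
  exact Ideal.mem_sInf.mp hmem ⟨bot_le, hM⟩

/-- The first-coordinate projection. -/
def amalgFst : amalgamation f J →+* R :=
  (RingHom.fst R S).comp (amalgamation f J).subtype

theorem amalgFst_surjective : Function.Surjective (amalgFst f J) :=
  fun r => ⟨⟨(r, f r), ⟨0, J.zero_mem, by simp⟩⟩, rfl⟩

theorem key_surj [Nontrivial R]
    (hstar : conditionStar f J)
    (hZJ : zdivSet (amalgamation f J) ⊆
      (Ideal.jacobson (⊥ : Ideal (amalgamation f J)) : Set (amalgamation f J)))
    (hloc : ∀ (m : Ideal R) (hm : m.IsMaximal), ∀ r ∈ nonZeroDivisors R,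
      algebraMap S (Localization (amalgT f J m hm.isPrime)) (f r) •
          J.map (algebraMap S (Localization (amalgT f J m hm.isPrime))) =
        J.map (algebraMap S (Localization (amalgT f J m hm.isPrime))))
    (a : R) (ha : a ∈ nonZeroDivisors R) (k : S) (hk : k ∈ J) (j : S) (hj : j ∈ J) :
    ∃ j' ∈ J, (f a + k) * j' = j := by
  set u := f a + k with hu
  by_contra hcon
  push_neg at hcon
  set A := amalgamation f J
  let Q : Ideal A :=
  { carrier := {α | ∃ j' ∈ J, u * j' = (α : R × S).2 * j}
    add_mem' := by
      rintro α β ⟨j₁, hj₁, e₁⟩ ⟨j₂, hj₂, e₂⟩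
      refine ⟨j₁ + j₂, J.add_mem hj₁ hj₂, ?_⟩
      have : ((α + β : A) : R × S).2 = (α : R × S).2 + (β : R × S).2 := rfl
      rw [this, mul_add, e₁, e₂, add_mul]
    zero_mem' := ⟨0, J.zero_mem, by simp⟩
    smul_mem' := by
      rintro c α ⟨j₁, hj₁, e₁⟩
      refine ⟨(c : R × S).2 * j₁, J.mul_mem_left _ hj₁, ?_⟩
      have : ((c • α : A) : R × S).2 = (c : R × S).2 * (α : R × S).2 := rfl
      rw [this, show u * ((c : R × S).2 * j₁) = (c : R × S).2 * (u * j₁) by ring, e₁]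
      ring }
  have hQmem : ∀ α : A, α ∈ Q ↔ ∃ j' ∈ J, u * j' = (α : R × S).2 * j := fun α => Iff.rfl
  have hQne : Q ≠ ⊤ := by
    intro htop
    have h1 : (1 : A) ∈ Q := htop ▸ Submodule.mem_top
    obtain ⟨j', hj', e⟩ := h1
    refine hcon j' hj' ?_
    rw [e]
    show (1 : S) * j = j
    ring
  obtain ⟨M, hMmax, hQM⟩ := Ideal.exists_le_maximal Q hQne
  set π := amalgFst f J
  have hm0ne : M.map π ≠ ⊤ := by
    rw [Ideal.ne_top_iff_one]
    intro h1
    rw [Ideal.mem_map_iff_of_surjective π (amalgFst_surjective f J)] at h1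
    obtain ⟨β, hβM, hβ1⟩ := h1
    obtain ⟨jβ, hjβ, hβ2⟩ := β.2
    have h1M : (1 : A) ∈ M := by
      have heq : (1 : A) = β - amalgK f J jβ hjβ := by
        apply Subtype.ext
        apply Prod.ext
        · show (1 : R) = (β : R × S).1 - 0
          have hβ1' : (β : R × S).1 = 1 := hβ1
          rw [hβ1']; ring
        · show (1 : S) = (β : R × S).2 - jβ
          have hβ1' : (β : R × S).1 = 1 := hβ1
          rw [hβ2, hβ1']
          simp
      rw [heq]
      exact M.sub_mem hβM (amalgK_mem_max f J hstar hZJ jβ hjβ M hMmax)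
    exact hMmax.ne_top ((Ideal.eq_top_iff_one M).mpr h1M)
  obtain ⟨m', hm'max, hm'⟩ := Ideal.exists_le_maximal _ hm0ne
  -- localization
  set T := amalgT f J m' hm'max.isPrime with hT
  set L := Localization T with hL
  have hfa := hloc m' hm'max a ha
  set JL := J.map (algebraMap S L) with hJL
  -- every `1 + κ` with `κ ∈ JL` is a unit
  have hunit : ∀ κ ∈ JL, IsUnit (1 + κ) := by
    intro κ hκ
    obtain ⟨⟨⟨j₂, hj₂⟩, t₂⟩, ht⟩ := (IsLocalization.mem_map_algebraMap_iff T L).mp hκ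
    have htJ : (t₂ : S) + j₂ ∈ T := by
      obtain ⟨b, hb, j₃, hj₃, ht₂⟩ := t₂.2
      exact ⟨b, hb, j₃ + j₂, J.add_mem hj₃ hj₂, by rw [ht₂]; ring⟩
    have hprod : (1 + κ) * algebraMap S L t₂ = algebraMap S L ((t₂ : S) + j₂) := by
      rw [map_add, add_mul, one_mul, ht]
    have hu2 : IsUnit (algebraMap S L ((t₂ : S) + j₂)) := IsLocalization.map_units L ⟨_, htJ⟩
    rw [← hprod] at hu2
    exact isUnit_of_mul_isUnit_left hu2
  have hkL : algebraMap S L k ∈ JL := Ideal.mem_map_of_mem _ hk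
  rw [← hfa, ← SetLike.mem_coe, Submodule.coe_pointwise_smul] at hkL
  obtain ⟨κ, hκ, hκeq⟩ := hkL
  dsimp only at hκeq
  rw [smul_eq_mul] at hκeq
  have hκJL : κ ∈ JL := hκ
  have hunitκ := hunit κ hκJL
  have hjL : algebraMap S L j ∈ JL := Ideal.mem_map_of_mem _ hj
  rw [← hfa, ← SetLike.mem_coe, Submodule.coe_pointwise_smul] at hjL
  obtain ⟨κ₂, hκ₂, hκ₂eq⟩ := hjL
  dsimp only at hκ₂eq
  rw [smul_eq_mul] at hκ₂eq
  have hκ₂JL : κ₂ ∈ JL := hκ₂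
  set ν := (↑hunitκ.unit⁻¹ : L) * κ₂ with hν
  have hνJL : ν ∈ JL := Ideal.mul_mem_left _ _ hκ₂JL
  have huL : algebraMap S L u = algebraMap S L (f a) * (1 + κ) := by
    rw [hu, map_add, mul_add, mul_one]
    congr 1
    exact hκeq.symm
  have hinv1 : (1 + κ) * (↑hunitκ.unit⁻¹ : L) = 1 := hunitκ.mul_val_inv
  have hju : algebraMap S L u * ν = algebraMap S L j := by
    rw [huL, hν]
    calc algebraMap S L (f a) * (1 + κ) * ((↑hunitκ.unit⁻¹ : L) * κ₂)
        = algebraMap S L (f a) * κ₂ * ((1 + κ) * (↑hunitκ.unit⁻¹ : L)) := by ring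
      _ = algebraMap S L (f a) * κ₂ := by rw [hinv1, mul_one]
      _ = algebraMap S L j := hκ₂eq
  obtain ⟨⟨⟨j₁, hj₁⟩, t₁⟩, e1⟩ := (IsLocalization.mem_map_algebraMap_iff T L).mp hνJL
  have e2 : algebraMap S L (u * j₁) = algebraMap S L (j * t₁) := by
    rw [map_mul, map_mul]
    calc algebraMap S L u * algebraMap S L j₁ = algebraMap S L u * (ν * algebraMap S L t₁) := by
          rw [e1]
      _ = (algebraMap S L u * ν) * algebraMap S L t₁ := by ring
      _ = algebraMap S L j * algebraMap S L t₁ := by rw [hju]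
  obtain ⟨t₃, e3⟩ := (IsLocalization.eq_iff_exists T L).mp e2
  obtain ⟨b, hb, j₄, hj₄, hs⟩ := (t₃ * t₁).2
  set α : A := ⟨(b, f b + j₄), ⟨j₄, hj₄, rfl⟩⟩ with hα
  have hαQ : α ∈ Q := by
    refine ⟨(t₃ : S) * j₁, J.mul_mem_left _ hj₁, ?_⟩
    show u * ((t₃ : S) * j₁) = (f b + j₄) * j
    have hs' : (f b + j₄ : S) = (t₃ : S) * (t₁ : S) := by
      have : ((t₃ * t₁ : T) : S) = (t₃ : S) * (t₁ : S) := rfl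
      rw [← this, hs]
    rw [hs']
    calc u * ((t₃ : S) * j₁) = (t₃ : S) * (u * j₁) := by ring
      _ = (t₃ : S) * (j * t₁) := e3
      _ = (t₃ : S) * (t₁ : S) * j := by ring
  have hαM : α ∈ M := hQM hαQ
  have hbm : b ∈ m' := hm' (Ideal.mem_map_of_mem π hαM)
  exact hb hbm

end Key

theorem stmt6 {R S : Type*} [CommRing R] [CommRing S] (f : R →+* S) (J : Ideal S)
    (hJ : J ≠ ⊤) (hreg : ∀ r ∈ nonZeroDivisors R, f r ∈ nonZeroDivisors S)
    (hstar : conditionStar f J)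
    (hZJ : zdivSet (amalgamation f J) ⊆
      (Ideal.jacobson (⊥ : Ideal (amalgamation f J)) : Set (amalgamation f J)))
    (hR : IsPruferRing R)
    (hloc : ∀ (m : Ideal R) (hm : m.IsMaximal), ∀ r ∈ nonZeroDivisors R,
      algebraMap S (Localization (amalgT f J m hm.isPrime)) (f r) •
          J.map (algebraMap S (Localization (amalgT f J m hm.isPrime))) =
        J.map (algebraMap S (Localization (amalgT f J m hm.isPrime)))) :
    IsPruferRing (amalgamation f J) := by

  intro I hIbot hIfg hex
  obtain ⟨x, hxI, hxreg⟩ := hex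
  have hRnt : Nontrivial R := by
    by_contra hns
    rw [not_nontrivial_iff_subsingleton] at hns
    have h0 : (0 : R) ∈ nonZeroDivisors R :=
      mem_nonZeroDivisors_iff_right.mpr fun z _ => Subsingleton.elim z 0
    have h0S := hreg 0 h0
    rw [map_zero] at h0S
    apply hJ
    rw [Ideal.eq_top_iff_one]
    have h1 : (1 : S) = 0 := mem_nonZeroDivisors_iff_right.mp h0S 1 (mul_zero 1)
    rw [h1]
    exact J.zero_mem
  have hxnz : x ∉ zdivSet (amalgamation f J) := by
    rintro ⟨b, hb, hxb⟩
    exact hb (mem_nonZeroDivisors_iff_right.mp hxreg b (by rw [mul_comm]; exact hxb))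
  have hx1 : (x : R × S).1 ∈ nonZeroDivisors R := by
    rw [mem_nonZeroDivisors_iff_right]
    intro z hz
    by_contra hz0
    exact hxnz ((hstar x).mpr (Or.inl ⟨z, hz0, by rw [mul_comm]; exact hz⟩))
  have hx1' := mem_nonZeroDivisors_iff_right.mp hx1
  obtain ⟨k, hk, hx2⟩ := x.2
  set π := amalgFst f J with hπdef
  have hπs := amalgFst_surjective f J
  have hπx : π x = (x : R × S).1 := rfl
  have haI₀ : (x : R × S).1 ∈ I.map π := hπx ▸ Ideal.mem_map_of_mem π hxI
  have hproj : Module.Projective R (I.map π) := by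
    apply hR (I.map π) ?_ (Ideal.FG.map hIfg π) ⟨(x : R × S).1, haI₀, hx1⟩
    intro hb
    rw [hb] at haI₀
    have ha0 : (x : R × S).1 = 0 := Ideal.mem_bot.mp haI₀
    exact one_ne_zero (hx1' 1 (by rw [ha0, mul_zero]))
  obtain ⟨I₀', hinv⟩ := exists_mul_eq_span_of_projective (I.map π) ((x : R × S).1) haI₀ hproj
  -- key: multiplication by `x.2` is surjective on `J`
  have keyj : ∀ j ∈ J, ∃ j' ∈ J, (x : R × S).2 * j' = j := by
    intro j hj
    obtain ⟨j', hj', he⟩ := key_surj f J hstar hZJ hloc ((x : R × S).1) hx1 k hk j hj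
    exact ⟨j', hj', by rw [hx2]; exact he⟩
  have hKeq : ∀ j (hj : j ∈ J) j' (hj' : j' ∈ J), (x : R × S).2 * j' = j →
      amalgK f J j hj = x * amalgK f J j' hj' := by
    intro j hj j' hj' he
    apply Subtype.ext
    apply Prod.ext
    · show (0 : R) = (x : R × S).1 * 0
      rw [mul_zero]
    · show j = (x : R × S).2 * j'
      exact he.symm
  have hKspan : ∀ j (hj : j ∈ J), amalgK f J j hj ∈ Ideal.span {x} := by
    intro j hj
    obtain ⟨j', hj', he⟩ := keyj j hj
    rw [Ideal.mem_span_singleton']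
    exact ⟨amalgK f J j' hj', by rw [mul_comm]; exact (hKeq j hj j' hj' he).symm⟩
  have hKII : ∀ j (hj : j ∈ J), amalgK f J j hj ∈ I * I₀'.comap π := by
    intro j hj
    obtain ⟨j', hj', he⟩ := keyj j hj
    rw [hKeq j hj j' hj' he]
    refine Ideal.mul_mem_mul hxI (Ideal.mem_comap.mpr ?_)
    show (0 : R) ∈ I₀'
    exact I₀'.zero_mem
  have hmain : I * I₀'.comap π = Ideal.span {x} := by
    apply le_antisymm
    · rw [Ideal.mul_le]
      intro α hα β hβ
      have hπβ : π β ∈ I₀' := hβ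
      have h1 : π α * π β ∈ I.map π * I₀' := Ideal.mul_mem_mul (Ideal.mem_map_of_mem π hα) hπβ
      rw [hinv, Ideal.mem_span_singleton'] at h1
      obtain ⟨c, hc⟩ := h1
      set cA : amalgamation f J := ⟨(c, f c), ⟨0, J.zero_mem, by simp⟩⟩ with hcA
      have hγ1 : ((α * β - x * cA : amalgamation f J) : R × S).1 = 0 := by
        show (α : R × S).1 * (β : R × S).1 - (x : R × S).1 * c = 0
        have h2 : (α : R × S).1 * (β : R × S).1 = c * (x : R × S).1 := hc.symm
        rw [h2]; ring
      obtain ⟨jγ, hjγ, hγ2⟩ := (α * β - x * cA).2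
      have hγeq : α * β - x * cA = amalgK f J jγ hjγ := by
        apply Subtype.ext
        apply Prod.ext
        · exact hγ1
        · show ((α * β - x * cA : amalgamation f J) : R × S).2 = jγ
          rw [hγ2, hγ1]
          simp
      have h3 : α * β = x * cA + amalgK f J jγ hjγ := by rw [← hγeq]; ring
      rw [h3]
      exact Ideal.add_mem _ (Ideal.mul_mem_right cA _ (Ideal.mem_span_singleton_self x))
        (hKspan jγ hjγ)
    · rw [Ideal.span_le, Set.singleton_subset_iff, SetLike.mem_coe]
      have h1 : (x : R × S).1 ∈ (I * I₀'.comap π).map π := by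
        rw [Ideal.map_mul, Ideal.map_comap_of_surjective π hπs I₀', hinv]
        exact Ideal.mem_span_singleton_self _
      obtain ⟨y, hy, hyx⟩ := (Ideal.mem_map_iff_of_surjective π hπs).mp h1
      obtain ⟨jδ, hjδ, hδ2⟩ := (x - y).2
      have hδ1 : ((x - y : amalgamation f J) : R × S).1 = 0 := by
        show (x : R × S).1 - (y : R × S).1 = 0
        have h2 : (y : R × S).1 = (x : R × S).1 := hyx
        rw [h2]; ring
      have hδeq : x - y = amalgK f J jδ hjδ := by
        apply Subtype.ext
        apply Prod.ext
        · exact hδ1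
        · show ((x - y : amalgamation f J) : R × S).2 = jδ
          rw [hδ2, hδ1]
          simp
      have h3 : x = y + amalgK f J jδ hjδ := by rw [← hδeq]; ring
      rw [h3]
      exact Ideal.add_mem _ hy (hKII jδ hjδ)
  exact projective_of_mul_eq_span I (I₀'.comap π) x hxI hxreg hmain
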